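/- Let k and ℓ be positive integers and let θ = e^{k/ℓ}. Let n be a positive integer with n > max(k/(ℓ·log 2), (e^{k/ℓ} − 1)(2k + 1)). Let r ∈ {0, 1, …, k−1} with n ≡ r (mod k), and let v_r be the unique integer with 0 ≤ v_r ≤ 2k − 1 and k + 2ℓr ≡ v_r (mod 2k). Then M_θ(n) = (ℓ/k)·n − 1/2 − v_r/(2k), and consequently M_θ(n) = ⌊(ℓ/k)·n − 1/2⌋. -/

import Mathlib

open Real

/-- `M θ n = ⌊1 / {θ^(1/n)}⌋`, the integer part of the reciprocal of the
fractional part of the `n`-th root of `θ`. -/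
noncomputable def M (θ : ℝ) (n : ℕ) : ℤ := ⌊1 / Int.fract (θ ^ ((n : ℝ)⁻¹))⌋

set_option maxHeartbeats 1000000 in
theorem stmt_16 (k ℓ : ℕ) (hk : 0 < k) (hℓ : 0 < ℓ) (θ : ℝ)
    (hθ : θ = Real.exp ((k : ℝ) / (ℓ : ℝ))) (n : ℕ)
    (hn : (n : ℝ) > max ((k : ℝ) / ((ℓ : ℝ) * Real.log 2))
      ((Real.exp ((k : ℝ) / (ℓ : ℝ)) - 1) * (2 * (k : ℝ) + 1)))
    (r : ℕ) (hr : r < k) (hnr : n ≡ r [MOD k])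
    (v : ℕ) (hv : v ≤ 2 * k - 1) (hvr : k + 2 * ℓ * r ≡ v [MOD 2 * k]) :
    (M θ n : ℝ) = (ℓ : ℝ) / (k : ℝ) * n - 1 / 2 - (v : ℝ) / (2 * (k : ℝ)) ∧
    M θ n = ⌊(ℓ : ℝ) / (k : ℝ) * n - 1 / 2⌋ := by
  have hk1 : (1:ℝ) ≤ (k:ℝ) := by exact_mod_cast hk
  have hl1 : (1:ℝ) ≤ (ℓ:ℝ) := by exact_mod_cast hℓ
  have hkpos : (0:ℝ) < k := by linarith
  have hlpos : (0:ℝ) < ℓ := by linarith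
  have hexp1 : (k:ℝ)/(ℓ:ℝ) + 1 ≤ Real.exp ((k:ℝ)/(ℓ:ℝ)) := Real.add_one_le_exp _
  have hklpos : (0:ℝ) < (k:ℝ)/(ℓ:ℝ) := by positivity
  have hn2 : (n:ℝ) > ((k:ℝ)/(ℓ:ℝ)) * (2*(k:ℝ)+1) := by
    have h := le_max_right ((k : ℝ) / ((ℓ : ℝ) * Real.log 2))
      ((Real.exp ((k : ℝ) / (ℓ : ℝ)) - 1) * (2 * (k : ℝ) + 1))
    nlinarith [hn, h]
  have hnpos : (0:ℝ) < n := by nlinarith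
  have hnn : 0 < n := by exact_mod_cast hnpos
  set X : ℝ := (k:ℝ) / ((ℓ:ℝ) * n) with hXdef
  have hX0 : 0 < X := by positivity
  have hL : X * ((ℓ:ℝ) * n) = k := by rw [hXdef]; field_simp
  -- X * (2k+1) < 1
  have hn2' : (k:ℝ)*(2*(k:ℝ)+1) < (ℓ:ℝ)*n := by
    rw [gt_iff_lt, div_mul_eq_mul_div, div_lt_iff₀ hlpos] at hn2
    nlinarith
  have hXk : X * (2*(k:ℝ)+1) < 1 := by
    rw [hXdef, div_mul_eq_mul_div, div_lt_one (by positivity)]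
    nlinarith
  have hkX : (k:ℝ) * X < 1/2 := by nlinarith
  have hXhalf : X < 1/2 := by nlinarith
  -- X < log 2
  have hlog2 : (0:ℝ) < Real.log 2 := Real.log_pos (by norm_num)
  have hXlog : X < Real.log 2 := by
    have h := le_max_left ((k : ℝ) / ((ℓ : ℝ) * Real.log 2))
      ((Real.exp ((k : ℝ) / (ℓ : ℝ)) - 1) * (2 * (k : ℝ) + 1))
    have h2 : (k:ℝ) / ((ℓ:ℝ) * Real.log 2) < n := lt_of_le_of_lt h hn
    rw [hXdef, div_lt_iff₀ (by positivity)]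
    rw [div_lt_iff₀ (by positivity)] at h2
    nlinarith
  -- θ ^ (n⁻¹) = exp X
  have hθn : θ ^ ((n:ℝ)⁻¹) = Real.exp X := by
    rw [hθ, Real.rpow_def_of_pos (Real.exp_pos _), Real.log_exp]
    congr 1
    rw [hXdef]
    field_simp
  -- fract (exp X) = exp X - 1
  have hE1 : 1 < Real.exp X := by
    rw [show (1:ℝ) = Real.exp 0 by simp]
    exact Real.exp_lt_exp.mpr hX0
  have hE2 : Real.exp X < 2 := by
    calc Real.exp X < Real.exp (Real.log 2) := Real.exp_lt_exp.mpr hXlog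
    _ = 2 := Real.exp_log (by norm_num)
  have hfr : Int.fract (Real.exp X) = Real.exp X - 1 := by
    have h : Real.exp X = ((1:ℤ):ℝ) + (Real.exp X - 1) := by push_cast; ring
    rw [h, Int.fract_intCast_add, Int.fract_eq_self.mpr ⟨by linarith, by linarith⟩]
    push_cast; ring
  set E : ℝ := Real.exp X - 1 with hEdef
  have hEpos : 0 < E := by rw [hEdef]; linarith
  -- bounds on E
  have hsum : ∑ i ∈ Finset.range 3, X ^ i / (Nat.factorial i) = 1 + X + X^2/2 := by
    rw [Finset.sum_range_succ, Finset.sum_range_succ, Finset.sum_range_succ,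
      Finset.sum_range_zero]
    norm_num [Nat.factorial]
  have hElb : X + X^2/2 ≤ E := by
    have h := Real.sum_le_exp_of_nonneg hX0.le 3
    rw [hsum] at h
    rw [hEdef]
    linarith
  have hEub : E ≤ X + X^2/2 + (2/9)*X^3 := by
    have hb := Real.exp_bound (x := X) (by rw [abs_of_pos hX0]; linarith) (n := 3) (by norm_num)
    rw [hsum, abs_of_pos hX0] at hb
    have hb' := (abs_le.mp hb).2
    rw [hEdef]
    have h9 : ((3:ℕ).succ : ℝ) / ((3:ℕ).factorial * (3:ℕ)) = 2/9 := by
      norm_num [Nat.factorial]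
    rw [h9] at hb'
    nlinarith [hb', pow_pos hX0 3]
  -- the integer c
  obtain ⟨a, ha⟩ := (Nat.modEq_iff_dvd).mp hnr
  obtain ⟨b, hb⟩ := (Nat.modEq_iff_dvd).mp hvr
  set c : ℤ := -(ℓ:ℤ)*a - 1 - b with hcdef
  have hc : 2*(k:ℤ)*c = 2*ℓ*n - k - v := by
    push_cast at ha hb
    rw [hcdef]
    linear_combination (2*(ℓ:ℤ))*ha + hb
  have creal : 2*(k:ℝ)*(c:ℝ) = 2*(ℓ:ℝ)*n - k - v := by exact_mod_cast hc
  have hv0 : (0:ℝ) ≤ v := by positivity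
  have hvlt : (v:ℝ) < 2*(k:ℝ) := by
    have : v < 2*k := lt_of_le_of_lt hv (by omega)
    exact_mod_cast this
  set L : ℝ := (ℓ:ℝ) * n with hLdef
  have hLpos : 0 < L := by positivity
  -- lower bound : c ≤ 1/E
  have key1 : (2 - X) * E ≤ 2 * X := by
    nlinarith [mul_le_mul_of_nonneg_left hEub (by linarith : (0:ℝ) ≤ 2 - X),
      pow_nonneg hX0.le 3, pow_nonneg hX0.le 4]
  have key2 : (2*L - (k:ℝ)) * E ≤ 2*(k:ℝ) := by
    have hexpand : (2*L - (k:ℝ)) * X = (k:ℝ) * (2 - X) := by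
      have : X * L = k := hL
      linear_combination 2 * this
    have h3 : ((2*L - (k:ℝ)) * E) * X ≤ (2*(k:ℝ)) * X := by
      calc ((2*L - (k:ℝ)) * E) * X = (k:ℝ) * ((2 - X) * E) := by
            rw [mul_comm ((2*L - (k:ℝ))) E, mul_assoc, hexpand]; ring
      _ ≤ (k:ℝ) * (2*X) := by
            exact mul_le_mul_of_nonneg_left key1 hkpos.le
      _ = (2*(k:ℝ)) * X := by ring
    exact le_of_mul_le_mul_right h3 hX0
  have hlow : (c:ℝ) ≤ 1/E := by
    rw [le_div_iff₀ hEpos]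
    have h1 : 2*(k:ℝ)*((c:ℝ)*E) = (2*L - (k:ℝ) - v)*E := by
      rw [hLdef]; linear_combination E * creal
    have h2 : (2*L - (k:ℝ) - v)*E ≤ (2*L - (k:ℝ))*E := by
      nlinarith [mul_nonneg hv0 hEpos.le]
    nlinarith [key2]
  -- upper bound : 1/E < c + 1
  have key3 : (2*L + 1 - (k:ℝ)) * (X + X^2/2) > 2*(k:ℝ) := by
    have hexpand : (2*L + 1 - (k:ℝ)) * (X + X^2/2) =
        2*(k:ℝ) + X + X^2/2 - (k:ℝ)*X^2/2 := by
      have : X * L = k := hL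
      linear_combination (2 + X) * this
    rw [hexpand]
    nlinarith [mul_lt_mul_of_pos_right hkX hX0, mul_pos hX0 hX0]
  have hup : 1/E < (c:ℝ) + 1 := by
    rw [div_lt_iff₀ hEpos]
    have hk2 : (k:ℝ) ≤ (k:ℝ)*(2*(k:ℝ)+1) :=
      le_mul_of_one_le_right hkpos.le (by linarith)
    have hLk : (k:ℝ) ≤ L := le_trans hk2 hn2'.le
    have h0 : (0:ℝ) ≤ 2*L + 1 - (k:ℝ) := by linarith
    have h1 : (2*L + 1 - (k:ℝ)) * (X + X^2/2) ≤ (2*L + 1 - (k:ℝ)) * E :=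
      mul_le_mul_of_nonneg_left hElb h0
    have hv2 : (v:ℝ) + 1 ≤ 2*(k:ℝ) := by
      have : v + 1 ≤ 2*k := by omega
      exact_mod_cast this
    have h2 : (2*L + 1 - (k:ℝ)) * E ≤ (2*L + (k:ℝ) - v) * E :=
      mul_le_mul_of_nonneg_right (by linarith) hEpos.le
    have h3 : 2*(k:ℝ)*(((c:ℝ)+1)*E) = (2*L + (k:ℝ) - v)*E := by
      rw [hLdef]; linear_combination E * creal
    have h4 : 2*(k:ℝ) * 1 < 2*(k:ℝ)*(((c:ℝ)+1)*E) := by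
      rw [h3, mul_one]
      exact (key3.trans_le h1).trans_le h2
    exact lt_of_mul_lt_mul_left h4 (by positivity)
  -- M θ n = c
  have hM : M θ n = c := by
    unfold M
    rw [hθn, hfr]
    exact Int.floor_eq_iff.mpr ⟨hlow, by push_cast; linarith [hup]⟩
  have hceq : (c:ℝ) = (ℓ : ℝ) / (k : ℝ) * n - 1 / 2 - (v : ℝ) / (2 * (k : ℝ)) := by
    have h1 : (c:ℝ) = (2*(ℓ:ℝ)*n - k - v)/(2*(k:ℝ)) := by
      rw [eq_div_iff (by positivity)]
      linear_combination creal
    rw [h1]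
    field_simp
  constructor
  · rw [hM]; exact hceq
  · rw [hM]
    have : (ℓ : ℝ) / (k : ℝ) * n - 1 / 2 = (c:ℝ) + (v:ℝ) / (2 * (k:ℝ)) := by
      rw [hceq]; ring
    rw [this, Int.floor_intCast_add]
    have : ⌊(v:ℝ) / (2 * (k:ℝ))⌋ = 0 := by
      apply Int.floor_eq_zero_iff.mpr
      constructor
      · positivity
      · rw [div_lt_one (by positivity)]; exact hvlt
    omega
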